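/- In the Weyl algebra, for a non-crossing diagram D = (c_1,…,c_p) with all chords c_s = (i_s, j_s) satisfying i_s < j_s, the product L_D = L_{c_1}⋯L_{c_p} equals, modulo the span of products of fewer than p pairs of generators (lower filtration order), the monomial m_D plus an integer linear combination of monomials m_{D'} over diagrams D' of the same length that are strictly greater than D in the lexicographic order on diagrams. -/

import Mathlib

open scoped BigOperators

/-- Weak lexicographic order on chords. -/
def chordLe {n : ℕ} (c d : Fin n × Fin n) : Prop :=
  c.1 < d.1 ∨ (c.1 = d.1 ∧ c.2 ≤ d.2)

/-- Strict lexicographic order on chords. -/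
def chordLt {n : ℕ} (c d : Fin n × Fin n) : Prop :=
  c.1 < d.1 ∨ (c.1 = d.1 ∧ c.2 < d.2)

/-- The angular momentum operator `L_c = x_i y_j - x_j y_i` of a chord `c = (i,j)`. -/
def Lchord {R : Type} [Ring R] {n : ℕ} (x y : Fin n → R) (c : Fin n × Fin n) : R :=
  x c.1 * y c.2 - x c.2 * y c.1

/-- The ordered product `L_D = L_{c₁} ⋯ L_{c_p}` of a diagram `D`. -/
def Ldiag {R : Type} [Ring R] {n : ℕ} (x y : Fin n → R)
    (D : List (Fin n × Fin n)) : R :=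
  (D.map (Lchord x y)).prod

/-- The normally ordered monomial `m_D = x^{α(D)} y^{β(D)}` of a diagram `D`. -/
def mdiag {R : Type} [Ring R] {n : ℕ} (x y : Fin n → R)
    (D : List (Fin n × Fin n)) : R :=
  ((List.finRange n).map fun i => x i ^ (D.map Prod.fst).count i).prod *
    ((List.finRange n).map fun i => y i ^ (D.map Prod.snd).count i).prod

/-- The `p`-th filtration piece of the Weyl algebra: the span of all products of at most
`p` generators. -/
def weylFilt {R : Type} [Ring R] [Algebra ℂ R] {n : ℕ} (x y : Fin n → R)
    (p : ℕ) : Submodule ℂ R :=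
  Submodule.span ℂ
    {w | ∃ l : List R, l.length ≤ p ∧ (∀ g ∈ l, (∃ i, g = x i) ∨ (∃ i, g = y i)) ∧
      w = l.prod}

theorem chordLe_refl {n : ℕ} (c : Fin n × Fin n) : chordLe c c := Or.inr ⟨rfl, le_refl _⟩

theorem chordLe_trans {n : ℕ} {a b c : Fin n × Fin n} (h1 : chordLe a b) (h2 : chordLe b c) :
    chordLe a c := by
  obtain ⟨a1, a2⟩ := a; obtain ⟨b1, b2⟩ := b; obtain ⟨c1, c2⟩ := c
  simp only [chordLe, Fin.lt_def, Fin.le_def, Fin.ext_iff] at *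
  omega

theorem chordLe_total {n : ℕ} (a b : Fin n × Fin n) : chordLe a b ∨ chordLe b a := by
  obtain ⟨a1, a2⟩ := a; obtain ⟨b1, b2⟩ := b
  simp only [chordLe, Fin.lt_def, Fin.le_def, Fin.ext_iff]
  omega

theorem chordLe_antisymm {n : ℕ} {a b : Fin n × Fin n} (h1 : chordLe a b) (h2 : chordLe b a) :
    a = b := by
  obtain ⟨a1, a2⟩ := a; obtain ⟨b1, b2⟩ := b
  simp only [chordLe, Fin.lt_def, Fin.le_def, Fin.ext_iff, Prod.mk.injEq] at *
  omega

theorem chordLt_iff {n : ℕ} {a b : Fin n × Fin n} : chordLt a b ↔ chordLe a b ∧ a ≠ b := by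
  obtain ⟨a1, a2⟩ := a; obtain ⟨b1, b2⟩ := b
  simp only [chordLt, chordLe, Fin.lt_def, Fin.le_def, Fin.ext_iff, ne_eq, Prod.mk.injEq, not_and]
  omega

instance {n : ℕ} : IsAntisymm (Fin n × Fin n) chordLe := ⟨fun _ _ => chordLe_antisymm⟩

section Weyl

variable {R : Type} [Ring R] [Algebra ℂ R] {n : ℕ} (x y : Fin n → R)

/-- Word in the generators indexed by letters. -/
def gword (l : List (Sum (Fin n) (Fin n))) : R := (l.map (Sum.elim x y)).prod

theorem weylFilt_mono {p q : ℕ} (h : p ≤ q) : weylFilt x y p ≤ weylFilt x y q := by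
  apply Submodule.span_mono
  rintro w ⟨l, hl, hg, rfl⟩
  exact ⟨l, hl.trans h, hg, rfl⟩

theorem gword_mem (l : List (Sum (Fin n) (Fin n))) {p : ℕ} (h : l.length ≤ p) :
    gword x y l ∈ weylFilt x y p := by
  apply Submodule.subset_span
  refine ⟨l.map (Sum.elim x y), by simpa using h, ?_, rfl⟩
  intro g hg
  rcases List.mem_map.mp hg with ⟨a, _, rfl⟩
  rcases a with i | i
  · exact Or.inl ⟨i, rfl⟩
  · exact Or.inr ⟨i, rfl⟩

theorem filt_mul_left {p : ℕ} (a : Sum (Fin n) (Fin n)) {w : R} (hw : w ∈ weylFilt x y p) :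
    Sum.elim x y a * w ∈ weylFilt x y (p + 1) := by
  induction hw using Submodule.span_induction with
  | mem w hw =>
    obtain ⟨l, hl, hg, rfl⟩ := hw
    refine Submodule.subset_span ⟨Sum.elim x y a :: l, by simpa using hl, ?_, by simp⟩
    intro g hg'
    rcases List.mem_cons.mp hg' with rfl | hgl
    · rcases a with i | i
      · exact Or.inl ⟨i, rfl⟩
      · exact Or.inr ⟨i, rfl⟩
    · exact hg g hgl
  | zero => simpa using zero_mem _
  | add u v hu hv ihu ihv => rw [mul_add]; exact add_mem ihu ihv
  | smul c u hu ihu => rw [Algebra.mul_smul_comm]; exact Submodule.smul_mem _ _ ihu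

variable (hyx : ∀ i j, y i * x j - x j * y i = if i = j then 1 else 0)
    (hxx : ∀ i j, x i * x j = x j * x i)
    (hyy : ∀ i j, y i * y j = y j * y i)

include hyx hxx hyy in
theorem gword_swap (a b : Sum (Fin n) (Fin n)) (l : List (Sum (Fin n) (Fin n))) :
    gword x y (b :: a :: l) - gword x y (a :: b :: l) ∈ weylFilt x y l.length := by
  have h : gword x y (b :: a :: l) - gword x y (a :: b :: l)
      = (Sum.elim x y b * Sum.elim x y a - Sum.elim x y a * Sum.elim x y b) * gword x y l := by
    simp only [gword, List.map_cons, List.prod_cons, sub_mul, mul_assoc]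
  rw [h]
  have hw : gword x y l ∈ weylFilt x y l.length := gword_mem x y l le_rfl
  rcases a with i | i <;> rcases b with j | j
  · rw [show Sum.elim x y (Sum.inl j) * Sum.elim x y (Sum.inl i)
        - Sum.elim x y (Sum.inl i) * Sum.elim x y (Sum.inl j) = 0 by
      simp [hxx i j, sub_self]]
    simpa using zero_mem _
  · -- a = inl i (x i), b = inr j (y j) : y j * x i - x i * y j = ite
    rw [show Sum.elim x y (Sum.inr j) * Sum.elim x y (Sum.inl i)
        - Sum.elim x y (Sum.inl i) * Sum.elim x y (Sum.inr j)
        = if j = i then 1 else 0 by simpa using hyx j i]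
    split
    · simpa using hw
    · simpa using zero_mem _
  · -- a = inr i (y i), b = inl j (x j) : x j * y i - y i * x j = -(ite)
    rw [show Sum.elim x y (Sum.inl j) * Sum.elim x y (Sum.inr i)
        - Sum.elim x y (Sum.inr i) * Sum.elim x y (Sum.inl j)
        = -(if i = j then 1 else 0) by
      simp only [Sum.elim_inl, Sum.elim_inr, neg_sub, ← hyx i j]]
    split
    · rw [neg_one_mul]; exact neg_mem hw
    · simpa using zero_mem _
  · rw [show Sum.elim x y (Sum.inr j) * Sum.elim x y (Sum.inr i)
        - Sum.elim x y (Sum.inr i) * Sum.elim x y (Sum.inr j) = 0 by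
      simp [hyy j i, sub_self]]
    simpa using zero_mem _

include hyx hxx hyy in
theorem gword_perm {l1 l2 : List (Sum (Fin n) (Fin n))} (h : l1.Perm l2) :
    gword x y l1 - gword x y l2 ∈ weylFilt x y (l1.length - 2) := by
  induction h with
  | nil => simpa using zero_mem _
  | cons a h ih =>
    rename_i t1 t2
    rcases t1 with _ | ⟨b, t1'⟩
    · rw [List.Perm.nil_eq h]; simpa using zero_mem _
    rcases t1' with _ | ⟨c, t1''⟩
    · rw [show t2 = [b] from List.perm_singleton.mp h.symm]
      simpa using zero_mem _
    · have heq : gword x y (a :: (b :: c :: t1'')) - gword x y (a :: t2)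
          = Sum.elim x y a * (gword x y (b :: c :: t1'') - gword x y t2) := by
        simp [gword, List.map_cons, List.prod_cons, mul_sub]
      rw [heq]
      have := filt_mul_left x y a ih
      apply weylFilt_mono x y (by simp) this
  | swap a b l => exact gword_swap x y hyx hxx hyy a b l
  | trans h1 h2 ih1 ih2 =>
    rename_i l1 l2 l3
    have hlen := h1.length_eq
    have key : gword x y l1 - gword x y l3
        = (gword x y l1 - gword x y l2) + (gword x y l2 - gword x y l3) := (sub_add_sub_cancel _ _ _).symm
    rw [key]
    refine add_mem ih1 ?_
    rw [hlen]; exact ih2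

def wordP (E : List (Fin n × Fin n)) : R := (E.map fun c => x c.1 * y c.2).prod

end Weyl

def letters {n : ℕ} : List (Fin n × Fin n) → List (Sum (Fin n) (Fin n))
  | [] => []
  | c :: E => Sum.inl c.1 :: Sum.inr c.2 :: letters E

def canon {n : ℕ} (E : List (Fin n × Fin n)) : List (Sum (Fin n) (Fin n)) :=
  ((List.finRange n).flatMap fun i => List.replicate ((E.map Prod.fst).count i) (Sum.inl i)) ++
  ((List.finRange n).flatMap fun i => List.replicate ((E.map Prod.snd).count i) (Sum.inr i))

theorem length_letters {n : ℕ} (E : List (Fin n × Fin n)) :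
    (letters E).length = 2 * E.length := by
  induction E with
  | nil => simp [letters]
  | cons c E ih => simp [letters, ih]; omega

theorem count_letters_inl {n : ℕ} [BEq (Sum (Fin n) (Fin n))]
    [LawfulBEq (Sum (Fin n) (Fin n))] (E : List (Fin n × Fin n)) (i : Fin n) :
    (letters E).count (Sum.inl i) = (E.map Prod.fst).count i := by
  induction E with
  | nil => simp [letters]
  | cons c E ih =>
    simp [letters, List.count_cons, beq_iff_eq, ih]

theorem count_letters_inr {n : ℕ} [BEq (Sum (Fin n) (Fin n))]
    [LawfulBEq (Sum (Fin n) (Fin n))] (E : List (Fin n × Fin n)) (i : Fin n) :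
    (letters E).count (Sum.inr i) = (E.map Prod.snd).count i := by
  induction E with
  | nil => simp [letters]
  | cons c E ih =>
    simp [letters, List.count_cons, beq_iff_eq, ih]

theorem count_flat_eq {β γ : Type*} [DecidableEq β] [DecidableEq γ]
    (k : β → ℕ) (f : β → γ) (hf : Function.Injective f) :
    ∀ (L : List β), L.Nodup → ∀ i ∈ L,
      (L.flatMap fun q => List.replicate (k q) (f q)).count (f i) = k i := by
  intro L
  induction L with
  | nil => simp
  | cons b L ih =>
    intro hnd i hi
    rcases List.mem_cons.mp hi with rfl | hi'
    · have : f i ∉ (L.flatMap fun q => List.replicate (k q) (f q)) := by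
        intro hmem
        rcases List.mem_flatMap.mp hmem with ⟨q, hq, hmq⟩
        have := List.eq_of_mem_replicate hmq
        exact (List.nodup_cons.mp hnd).1 ((hf this).symm ▸ hq)
      simp [List.flatMap_cons, List.count_append, List.count_replicate,
        List.count_eq_zero.mpr this]
    · have hne : f b ≠ f i := fun h => (List.nodup_cons.mp hnd).1 (hf h ▸ hi')
      simp [List.flatMap_cons, List.count_append, List.count_replicate,
        ih (List.nodup_cons.mp hnd).2 i hi', hne]

theorem count_flat_ne {β γ : Type*} [DecidableEq γ]
    (k : β → ℕ) (f : β → γ) (a : γ) (ha : ∀ q, a ≠ f q) :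
    ∀ (L : List β), (L.flatMap fun q => List.replicate (k q) (f q)).count a = 0 := by
  intro L
  induction L with
  | nil => simp
  | cons b L ih =>
    simp [List.flatMap_cons, List.count_append, List.count_replicate, ih, (ha b).symm]

theorem letters_perm_canon {n : ℕ} (E : List (Fin n × Fin n)) :
    (letters E).Perm (canon E) := by
  letI : BEq (Sum (Fin n) (Fin n)) := instBEqOfDecidableEq
  rw [List.perm_iff_count]
  intro a
  have hA := count_flat_eq (fun q => (E.map Prod.fst).count q)
      (Sum.inl : Fin n → Sum (Fin n) (Fin n)) (fun a b h => Sum.inl.inj h)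
      (List.finRange n) (List.nodup_finRange n)
  have hB := count_flat_eq (fun q => (E.map Prod.snd).count q)
      (Sum.inr : Fin n → Sum (Fin n) (Fin n)) (fun a b h => Sum.inr.inj h)
      (List.finRange n) (List.nodup_finRange n)
  rcases a with i | i
  · have h2 : @List.count _ instBEqOfDecidableEq (Sum.inl i) (canon E) = (E.map Prod.fst).count i := by
      rw [canon, @List.count_append _ instBEqOfDecidableEq]
      simp only [hA i (List.mem_finRange i),
        count_flat_ne (fun q => (E.map Prod.snd).count q)
          (Sum.inr : Fin n → Sum (Fin n) (Fin n)) (Sum.inl i) (fun q => by simp)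
          (List.finRange n)]
      simp
    exact (@count_letters_inl n instBEqOfDecidableEq inferInstance E i).trans h2.symm
  · have h2 : @List.count _ instBEqOfDecidableEq (Sum.inr i) (canon E) = (E.map Prod.snd).count i := by
      rw [canon, @List.count_append _ instBEqOfDecidableEq]
      simp only [hB i (List.mem_finRange i),
        count_flat_ne (fun q => (E.map Prod.fst).count q)
          (Sum.inl : Fin n → Sum (Fin n) (Fin n)) (Sum.inr i) (fun q => by simp)
          (List.finRange n)]
      simp
    exact (@count_letters_inr n instBEqOfDecidableEq inferInstance E i).trans h2.symm

section Weyl2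

variable {R : Type} [Ring R] [Algebra ℂ R] {n : ℕ} (x y : Fin n → R)

theorem gword_append (A B : List (Sum (Fin n) (Fin n))) :
    gword x y (A ++ B) = gword x y A * gword x y B := by
  simp [gword]

theorem gword_letters (E : List (Fin n × Fin n)) :
    gword x y (letters E) = wordP x y E := by
  induction E with
  | nil => simp [letters, gword, wordP]
  | cons c E ih => simp [letters, gword, wordP, mul_assoc] at *; rw [ih]

theorem gword_flat (k : Fin n → ℕ) (f : Fin n → Sum (Fin n) (Fin n)) (L : List (Fin n)) :
    gword x y (L.flatMap fun i => List.replicate (k i) (f i))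
      = (L.map fun i => Sum.elim x y (f i) ^ k i).prod := by
  induction L with
  | nil => simp [gword]
  | cons b L ih =>
    rw [List.flatMap_cons, gword_append, ih]
    simp [gword, List.map_replicate, List.prod_replicate]

theorem gword_canon (E : List (Fin n × Fin n)) :
    gword x y (canon E) = mdiag x y E := by
  rw [canon, gword_append, gword_flat, gword_flat, mdiag]
  simp

variable (hyx : ∀ i j, y i * x j - x j * y i = if i = j then 1 else 0)
    (hxx : ∀ i j, x i * x j = x j * x i)
    (hyy : ∀ i j, y i * y j = y j * y i)

include hyx hxx hyy in
theorem wordP_sub_mdiag (E : List (Fin n × Fin n)) :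
    wordP x y E - mdiag x y E ∈ weylFilt x y (2 * E.length - 1) := by
  have h := gword_perm x y hyx hxx hyy (letters_perm_canon E)
  rw [gword_letters, gword_canon] at h
  exact weylFilt_mono x y (by rw [length_letters]; omega) h

end Weyl2

/-! ### Expansion of `Ldiag` into signed words -/

instance {n : ℕ} : DecidableRel (@chordLe n) := fun c d => by
  unfold chordLe; infer_instance

instance {n : ℕ} : DecidableRel (@chordLt n) := fun c d => by
  unfold chordLt; infer_instance

def expandD {n : ℕ} : List (Fin n × Fin n) → List (ℤ × List (Fin n × Fin n))
  | [] => [(1, [])]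
  | c :: D => ((expandD D).map fun q => (q.1, c :: q.2)) ++
      ((expandD D).map fun q => (-q.1, (c.2, c.1) :: q.2))

theorem expandD_shape {n : ℕ} (D : List (Fin n × Fin n)) :
    ∀ q ∈ expandD D, List.Forall₂ (fun c e => e = c ∨ e = (c.2, c.1)) D q.2 := by
  induction D with
  | nil =>
    intro q hq
    simp only [expandD, List.mem_singleton] at hq
    subst hq; exact List.Forall₂.nil
  | cons c D ih =>
    intro q hq
    rcases List.mem_append.mp hq with h | h <;> rcases List.mem_map.mp h with ⟨r, hr, rfl⟩
    · exact List.Forall₂.cons (Or.inl rfl) (ih r hr)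
    · exact List.Forall₂.cons (Or.inr rfl) (ih r hr)

theorem expandD_sign_one {n : ℕ} (D : List (Fin n × Fin n)) (hij : ∀ c ∈ D, c.1 < c.2) :
    ∀ q ∈ expandD D, q.2 = D → q.1 = 1 := by
  induction D with
  | nil =>
    intro q hq _
    simp only [expandD, List.mem_singleton] at hq
    subst hq; rfl
  | cons c D ih =>
    intro q hq hq2
    rcases List.mem_append.mp hq with h | h <;> rcases List.mem_map.mp h with ⟨r, hr, rfl⟩
    · simp only at hq2
      injection hq2 with _ h2
      exact ih (fun e he => hij e (List.mem_cons_of_mem c he)) r hr h2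
    · exfalso
      simp only at hq2
      injection hq2 with h1 h2
      have hc := hij c (List.mem_cons_self)
      have hfst : c.2 = c.1 := congrArg Prod.fst h1
      rw [hfst] at hc
      exact lt_irrefl _ hc

theorem one_mem_expandD {n : ℕ} (D : List (Fin n × Fin n)) :
    ((1 : ℤ), D) ∈ expandD D := by
  induction D with
  | nil => simp [expandD]
  | cons c D ih =>
    exact List.mem_append.mpr (Or.inl (List.mem_map.mpr ⟨(1, D), ih, rfl⟩))

theorem sum_ite_one {n : ℕ} (D : List (Fin n × Fin n)) (hij : ∀ c ∈ D, c.1 < c.2) :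
    ((expandD D).map fun q => if q = ((1 : ℤ), D) then q.1 else 0).sum = 1 := by
  induction D with
  | nil => simp [expandD]
  | cons c D ih =>
    rw [expandD, List.map_append, List.sum_append, List.map_map, List.map_map]
    have e1 : ((expandD D).map ((fun q => if q = ((1 : ℤ), c :: D) then q.1 else 0) ∘
        fun r => (r.1, c :: r.2))) = (expandD D).map fun r => if r = ((1 : ℤ), D) then r.1 else 0 := by
      refine List.map_congr_left fun r _ => ?_
      simp only [Function.comp]
      refine if_congr ?_ rfl rfl
      simp [Prod.ext_iff]
    have e2 : ((expandD D).map ((fun q => if q = ((1 : ℤ), c :: D) then q.1 else 0) ∘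
        fun r => (-r.1, (c.2, c.1) :: r.2))) = (expandD D).map fun _ => (0 : ℤ) := by
      refine List.map_congr_left fun r _ => ?_
      simp only [Function.comp]
      refine if_neg fun h => ?_
      injection h with _ h2
      injection h2 with h3 _
      have hc := hij c (List.mem_cons_self)
      have hfst : c.2 = c.1 := congrArg Prod.fst h3
      rw [hfst] at hc
      exact lt_irrefl _ hc
    rw [e1, e2, ih (fun e he => hij e (List.mem_cons_of_mem c he))]
    simp

theorem list_sum_map_neg {ι M : Type*} [AddCommGroup M] (l : List ι) (f : ι → M) :
    (l.map fun a => -f a).sum = -(l.map f).sum := by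
  induction l with
  | nil => simp
  | cons a l ih => simp [ih]; abel

theorem list_sum_sub {ι M : Type*} [AddCommGroup M] (l : List ι) (f g : ι → M) :
    (l.map f).sum - (l.map g).sum = (l.map fun a => f a - g a).sum := by
  induction l with
  | nil => simp
  | cons a l ih => simp only [List.map_cons, List.sum_cons, ← ih]; abel

theorem fiber_sum {β γ M : Type*} [AddCommGroup M] [DecidableEq γ]
    (k : β → γ) (g : γ → M) (F : Finset γ) :
    ∀ l : List (ℤ × β), (∀ q ∈ l, k q.2 ∈ F) →
      (l.map fun q => q.1 • g (k q.2)).sum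
        = ∑ b ∈ F, ((l.map fun q => if k q.2 = b then q.1 else 0).sum) • g b := by
  intro l
  induction l with
  | nil => simp
  | cons q l ih =>
    intro h
    rw [List.map_cons, List.sum_cons, ih (fun r hr => h r (List.mem_cons_of_mem _ hr))]
    simp only [List.map_cons, List.sum_cons, add_smul, ite_smul, zero_smul,
      Finset.sum_add_distrib]
    rw [Finset.sum_ite_eq F (k q.2) (fun b => q.1 • g b),
      if_pos (h q (List.mem_cons_self))]

/-! ### Sorting -/

def sortE {n : ℕ} (E : List (Fin n × Fin n)) : List (Fin n × Fin n) :=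
  E.mergeSort fun c d => decide (chordLe c d)

theorem sorted_sortE {n : ℕ} (E : List (Fin n × Fin n)) : (sortE E).Pairwise chordLe := by
  have h := List.pairwise_mergeSort (le := fun c d : Fin n × Fin n => decide (chordLe c d))
    (fun a b c hab hbc => decide_eq_true (chordLe_trans (of_decide_eq_true hab) (of_decide_eq_true hbc)))
    (fun a b => by simpa using chordLe_total a b) E
  exact h.imp fun hab => of_decide_eq_true hab

theorem sortE_perm {n : ℕ} (E : List (Fin n × Fin n)) : (sortE E).Perm E :=
  List.mergeSort_perm E _

theorem sortE_eq_of_sorted {n : ℕ} {E : List (Fin n × Fin n)} (h : E.Pairwise chordLe) :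
    sortE E = E :=
  (sortE_perm E).eq_of_pairwise (fun _ _ _ _ => chordLe_antisymm) (sorted_sortE E) h

/-! ### The lexicographic comparison lemma -/

theorem forall2_mem_right {α β : Type*} {r : α → β → Prop} {A : List α} {C : List β}
    (h : List.Forall₂ r A C) : ∀ b ∈ C, ∃ a ∈ A, r a b := by
  induction h with
  | nil => intro b hb; cases hb
  | cons hr _ ih =>
    intro b hb
    rcases List.mem_cons.mp hb with rfl | hb'
    · exact ⟨_, List.mem_cons_self, hr⟩
    · rcases ih b hb' with ⟨a, ha, har⟩
      exact ⟨a, List.mem_cons_of_mem _ ha, har⟩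

theorem forall2_append {α β : Type*} {r : α → β → Prop} {A₁ A₂ : List α} {C₁ C₂ : List β}
    (h1 : List.Forall₂ r A₁ C₁) (h2 : List.Forall₂ r A₂ C₂) :
    List.Forall₂ r (A₁ ++ A₂) (C₁ ++ C₂) := by
  induction h1 with
  | nil => exact h2
  | cons hr _ ih => exact List.Forall₂.cons hr ih

theorem forall2_decomp {α β : Type*} {r : α → β → Prop} :
    ∀ (l₁ : List β) {b : β} {l₂ : List β} {A : List α},
      List.Forall₂ r A (l₁ ++ b :: l₂) →
      ∃ Al am Ar, A = Al ++ am :: Ar ∧ List.Forall₂ r Al l₁ ∧ r am b ∧ List.Forall₂ r Ar l₂ := by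
  intro l₁
  induction l₁ with
  | nil =>
    intro b l₂ A h
    rcases List.forall₂_cons_right_iff.mp h with ⟨a, A', hr, hF, rfl⟩
    exact ⟨[], a, A', rfl, List.Forall₂.nil, hr, hF⟩
  | cons c l₁ ih =>
    intro b l₂ A h
    rcases List.forall₂_cons_right_iff.mp h with ⟨a, A', hr, hF, rfl⟩
    rcases ih hF with ⟨Al, am, Ar, rfl, hAl, hb, hAr⟩
    exact ⟨a :: Al, am, Ar, rfl, List.Forall₂.cons hr hAl, hb, hAr⟩

theorem cons_eq_append {α : Type*} (a : α) :
    ∀ (Al : List α) (am : α) (Ar : List α), (∀ e ∈ Al, e = a) → am = a →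
      Al ++ am :: Ar = a :: (Al ++ Ar) := by
  intro Al
  induction Al with
  | nil => intro am Ar _ ham; simp [ham]
  | cons e Al ih =>
    intro am Ar hAl ham
    have he : e = a := hAl e (List.mem_cons_self)
    rw [List.cons_append, ih am Ar (fun e' he' => hAl e' (List.mem_cons_of_mem _ he')) ham,
      he, List.cons_append]

theorem sorted_le_lex {n : ℕ} :
    ∀ (A : List (Fin n × Fin n)) {C B : List (Fin n × Fin n)},
      A.Pairwise chordLe → B.Pairwise chordLe → List.Forall₂ chordLe A C → C.Perm B →
      List.Lex chordLt A B ∨ A = B := by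
  intro A
  induction A with
  | nil =>
    intro C B _ _ hF hP
    have hC : C = [] := by cases hF; rfl
    subst hC
    right
    exact (hP.symm.eq_nil).symm
  | cons a A ih =>
    intro C B hA hB hF hP
    rcases List.forall₂_cons_left_iff.mp hF with ⟨c₀, C₁, hac, hF₁, rfl⟩
    cases B with
    | nil => exact absurd hP.eq_nil (by simp)
    | cons b B₁ =>
      have hbC : b ∈ c₀ :: C₁ := hP.symm.subset (List.mem_cons_self)
      have hab : chordLe a b := by
        rcases forall2_mem_right hF b hbC with ⟨a', ha', h'⟩
        rcases List.mem_cons.mp ha' with rfl | hmem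
        · exact h'
        · exact chordLe_trans (List.rel_of_pairwise_cons hA hmem) h'
      by_cases heq : a = b
      · subst heq
        rcases List.append_of_mem hbC with ⟨l₁, l₂, hC⟩
        rw [hC] at hF hP
        rcases forall2_decomp l₁ hF with ⟨Al, am, Ar, hAeq, hFl, hram, hFr⟩
        -- every element of Al equals a, and am = a
        have hmemA : ∀ e ∈ Al ++ am :: Ar, e = a ∨ chordLe a e := by
          intro e he
          rw [← hAeq] at he
          rcases List.mem_cons.mp he with rfl | he'
          · exact Or.inl rfl
          · exact Or.inr (List.rel_of_pairwise_cons hA he')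
        have hA' : (Al ++ am :: Ar).Pairwise chordLe := hAeq ▸ hA
        have ham : am = a := by
          have h1 : chordLe am a := hram
          rcases hmemA am (List.mem_append.mpr (Or.inr (List.mem_cons_self))) with h | h2
          · exact h
          · exact chordLe_antisymm h1 h2
        have hAl : ∀ e ∈ Al, e = a := by
          intro e he
          have h1 : chordLe e am := by
            rcases List.pairwise_append.mp hA' with ⟨_, _, hcross⟩
            exact hcross e he am (List.mem_cons_self)
          rcases hmemA e (List.mem_append.mpr (Or.inl he)) with h | h2
          · exact h
          · exact chordLe_antisymm (ham ▸ h1) h2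
        have hconseq : Al ++ am :: Ar = a :: (Al ++ Ar) := cons_eq_append a Al am Ar hAl ham
        have hA2 : A = Al ++ Ar := by
          rw [hconseq] at hAeq
          injection hAeq
        have hperm : (l₁ ++ l₂).Perm B₁ := (List.perm_middle.symm.trans hP).cons_inv
        have hF2 : List.Forall₂ chordLe A (l₁ ++ l₂) := by
          rw [hA2]; exact forall2_append hFl hFr
        rcases ih hA.of_cons hB.of_cons hF2 hperm with hlex | heq2
        · exact Or.inl (List.Lex.cons hlex)
        · right
          rw [heq2]
      · exact Or.inl (List.Lex.rel (chordLt_iff.mpr ⟨hab, heq⟩))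

theorem forall2_eq {n : ℕ} {D E : List (Fin n × Fin n)}
    (h : List.Forall₂ (fun c e => e = c ∨ e = (c.2, c.1)) D E) :
    (∀ c ∈ D, c.1 < c.2) → (∀ e ∈ E, e.1 < e.2) → E = D := by
  induction h with
  | nil => intro _ _; rfl
  | @cons c e D' E' hr hF ih =>
    intro hij hE
    have hc := hij c (List.mem_cons_self)
    have he := hE e (List.mem_cons_self)
    have hec : e = c := by
      rcases hr with h' | h'
      · exact h'
      · exfalso; rw [h'] at he; exact lt_asymm hc he
    rw [hec, ih (fun c' h' => hij c' (List.mem_cons_of_mem _ h'))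
      (fun e' h' => hE e' (List.mem_cons_of_mem _ h'))]

theorem forall2_chordLe_of_shape {n : ℕ} {D E : List (Fin n × Fin n)}
    (h : List.Forall₂ (fun c e => e = c ∨ e = (c.2, c.1)) D E) :
    (∀ c ∈ D, c.1 < c.2) → List.Forall₂ chordLe D E := by
  induction h with
  | nil => intro _; exact List.Forall₂.nil
  | @cons c e D' E' hr hF ih =>
    intro hij
    refine List.Forall₂.cons ?_ (ih fun c' h' => hij c' (List.mem_cons_of_mem _ h'))
    rcases hr with h' | h'
    · rw [h']; exact chordLe_refl c
    · rw [h']; exact Or.inl (hij c (List.mem_cons_self))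

section Weyl3

variable {R : Type} [Ring R] [Algebra ℂ R] {n : ℕ} (x y : Fin n → R)

theorem mdiag_perm_eq {E E' : List (Fin n × Fin n)} (hp : E.Perm E') :
    mdiag x y E = mdiag x y E' := by
  unfold mdiag
  have h1 : ∀ i : Fin n, (E.map Prod.fst).count i = (E'.map Prod.fst).count i :=
    fun i => (hp.map Prod.fst).count_eq i
  have h2 : ∀ i : Fin n, (E.map Prod.snd).count i = (E'.map Prod.snd).count i :=
    fun i => (hp.map Prod.snd).count_eq i
  simp only [h1, h2]

theorem Ldiag_expand (D : List (Fin n × Fin n)) :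
    Ldiag x y D = ((expandD D).map fun q => q.1 • wordP x y q.2).sum := by
  induction D with
  | nil => simp [Ldiag, expandD, wordP]
  | cons c D ih =>
    have h0 : Ldiag x y (c :: D) = Lchord x y c * Ldiag x y D := by simp [Ldiag]
    rw [h0, ih, Lchord, sub_mul, expandD, List.map_append, List.sum_append,
      List.map_map, List.map_map, ← List.sum_map_mul_left, ← List.sum_map_mul_left,
      sub_eq_add_neg]
    congr 1
    · refine congrArg List.sum (List.map_congr_left fun r _ => ?_)
      simp only [Function.comp]
      rw [mul_smul_comm, show wordP x y (c :: r.2) = x c.1 * y c.2 * wordP x y r.2 from by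
        simp [wordP]]
    · rw [← list_sum_map_neg]
      refine congrArg List.sum (List.map_congr_left fun r _ => ?_)
      simp only [Function.comp]
      rw [mul_smul_comm, neg_smul, show wordP x y ((c.2, c.1) :: r.2)
        = x c.2 * y c.1 * wordP x y r.2 from by simp [wordP]]

theorem list_sum_mem_filt {ι : Type*} (N : Submodule ℂ R) (l : List ι) (f : ι → R)
    (h : ∀ a ∈ l, f a ∈ N) : (l.map f).sum ∈ N := by
  induction l with
  | nil => simpa using zero_mem N
  | cons a l ih =>
    rw [List.map_cons, List.sum_cons]
    exact add_mem (h a (List.mem_cons_self))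
      (ih fun b hb => h b (List.mem_cons_of_mem _ hb))

end Weyl3


/-- For a non-crossing diagram `D` (a weakly increasing list of chords `(i,j)` with
`i < j` and no crossing), `L_D` equals, modulo lower filtration order, `m_D` plus an
integer combination of monomials `m_{D'}` over diagrams `D'` of the same length that are
strictly greater than `D` in the lexicographic order. -/
theorem stmt19 {R : Type} [Ring R] [Algebra ℂ R] {n : ℕ} (x y : Fin n → R)
    (hyx : ∀ i j, y i * x j - x j * y i = if i = j then 1 else 0)
    (hxx : ∀ i j, x i * x j = x j * x i)
    (hyy : ∀ i j, y i * y j = y j * y i)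
    (D : List (Fin n × Fin n))
    (hsort : D.Pairwise chordLe)
    (hij : ∀ c ∈ D, c.1 < c.2)
    (hnc : ∀ c ∈ D, ∀ c' ∈ D, c.1 < c'.1 → c'.1 < c.2 → c'.2 ≤ c.2) :
    ∃ (S : Finset (List (Fin n × Fin n))) (lam : List (Fin n × Fin n) → ℤ),
      (∀ D' ∈ S, D'.length = D.length ∧ D'.Pairwise chordLe ∧ (∀ c ∈ D', c.1 ≠ c.2) ∧
        List.Lex chordLt D D') ∧
      Ldiag x y D - mdiag x y D - ∑ D' ∈ S, lam D' • mdiag x y D' ∈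
        weylFilt x y (2 * D.length - 1) := by
  classical
  refine ⟨(((expandD D).map fun q => sortE q.2).toFinset).erase D,
    fun D' => ((expandD D).map fun q => if sortE q.2 = D' then q.1 else 0).sum, ?_, ?_⟩
  · intro D' hD'
    have hne : D' ≠ D := (Finset.mem_erase.mp hD').1
    have hmem : D' ∈ ((expandD D).map fun q => sortE q.2).toFinset := (Finset.mem_erase.mp hD').2
    rcases List.mem_map.mp (List.mem_toFinset.mp hmem) with ⟨q, hq, rfl⟩
    have hshape := expandD_shape D q hq
    have hlen : (sortE q.2).length = D.length := by
      rw [sortE, List.length_mergeSort]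
      exact hshape.length_eq.symm
    refine ⟨hlen, sorted_sortE q.2, ?_, ?_⟩
    · intro c hc
      have hcq : c ∈ q.2 := (sortE_perm q.2).subset hc
      rcases forall2_mem_right hshape c hcq with ⟨d, hd, hr⟩
      have hdlt := hij d hd
      rcases hr with h' | h'
      · rw [h']; exact ne_of_lt hdlt
      · rw [h']; exact ne_of_gt hdlt
    · rcases sorted_le_lex D hsort (sorted_sortE q.2)
        (forall2_chordLe_of_shape hshape hij) (sortE_perm q.2).symm with hlex | heq
      · exact hlex
      · exact absurd heq.symm hne
  · have hmemF : ∀ q ∈ expandD D,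
        sortE q.2 ∈ ((expandD D).map fun q => sortE q.2).toFinset := fun q hq =>
      List.mem_toFinset.mpr (List.mem_map.mpr ⟨q, hq, rfl⟩)
    have hDF : D ∈ ((expandD D).map fun q => sortE q.2).toFinset :=
      List.mem_toFinset.mpr (List.mem_map.mpr ⟨(1, D), one_mem_expandD D,
        sortE_eq_of_sorted hsort⟩)
    have key1 : Ldiag x y D - ((expandD D).map fun q => q.1 • mdiag x y q.2).sum
        ∈ weylFilt x y (2 * D.length - 1) := by
      rw [Ldiag_expand x y D, list_sum_sub]
      refine list_sum_mem_filt _ _ _ fun a ha => ?_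
      rw [← smul_sub]
      have h := wordP_sub_mdiag x y hyx hxx hyy a.2
      rw [← (expandD_shape D a ha).length_eq] at h
      exact zsmul_mem h a.1
    have key2 : ((expandD D).map fun q => q.1 • mdiag x y q.2).sum
        = ((expandD D).map fun q => q.1 • mdiag x y (sortE q.2)).sum := by
      refine congrArg List.sum (List.map_congr_left fun q _ => ?_)
      rw [mdiag_perm_eq x y (sortE_perm q.2).symm]
    have key3 := fiber_sum sortE (mdiag x y) (((expandD D).map fun q => sortE q.2).toFinset)
      (expandD D) hmemF
    have hlamD : ((expandD D).map fun q => if sortE q.2 = D then q.1 else 0).sum = 1 := by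
      have hcong : ((expandD D).map fun q => if sortE q.2 = D then q.1 else 0)
          = (expandD D).map fun q => if q = ((1 : ℤ), D) then q.1 else 0 := by
        refine List.map_congr_left fun q hq => ?_
        refine if_congr ⟨fun h => ?_, fun h => ?_⟩ rfl rfl
        · have hperm : q.2.Perm D := by rw [← h]; exact (sortE_perm q.2).symm
          have hmem2 : ∀ e ∈ q.2, e.1 < e.2 := fun e he => hij e (hperm.subset he)
          have h2 : q.2 = D := forall2_eq (expandD_shape D q hq) hij hmem2
          have h1 : q.1 = 1 := expandD_sign_one D hij q hq h2
          exact Prod.ext_iff.mpr ⟨h1, h2⟩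
        · rw [h]; exact sortE_eq_of_sorted hsort
      rw [hcong, sum_ite_one D hij]
    have hfinal : Ldiag x y D - mdiag x y D
        - ∑ D' ∈ (((expandD D).map fun q => sortE q.2).toFinset).erase D,
            ((expandD D).map fun q => if sortE q.2 = D' then q.1 else 0).sum • mdiag x y D'
        = Ldiag x y D - ((expandD D).map fun q => q.1 • mdiag x y q.2).sum := by
      rw [key2, key3,
        ← Finset.add_sum_erase _ (fun b =>
          ((expandD D).map fun q => if sortE q.2 = b then q.1 else 0).sum • mdiag x y b) hDF,
        hlamD, one_smul]
      abel
    rw [hfinal]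
    exact key1
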